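/- For every natural number k, the following identity of polynomials in ℤ[q] holds: Σ_{i=0}^{⌊(3k+2)/2⌋} (−1)^i · q^(i(i−1)/2) · [3k+2−i choose i]_q = 0, where [m choose n]_q denotes the Gaussian (q-)binomial coefficient. -/
import Mathlib
open Polynomial Finset

noncomputable def gb : ℕ → ℕ → Polynomial ℤ
  | _, 0 => 1
  | 0, _+1 => 0
  | m+1, n+1 => gb m (n+1) + X^(m-n) * gb m n

@[simp] lemma gb_zero_right (m : ℕ) : gb m 0 = 1 := by cases m <;> rfl

@[simp] lemma gb_zero_left (n : ℕ) : gb 0 (n+1) = 0 := rfl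

lemma gb_succ (m n : ℕ) : gb (m+1) (n+1) = gb m (n+1) + X^(m-n) * gb m n := rfl

lemma gb_eq_zero : ∀ m n : ℕ, m < n → gb m n = 0 := by
  intro m
  induction m with
  | zero => intro n h; cases n with | zero => omega | succ k => rfl
  | succ m ih =>
    intro n h
    cases n with
    | zero => omega
    | succ k =>
      rw [gb_succ, ih (k+1) (by omega), ih k (by omega)]
      ring

lemma one_sub_X_pow_ne_zero (i : ℕ) : (1 - (X : Polynomial ℤ)^(i+1)) ≠ 0 := by
  intro h
  have := congrArg (fun p => Polynomial.coeff p 0) h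
  simp [coeff_X_pow] at this

lemma P_ne_zero (n : ℕ) : (∏ i ∈ Finset.range n, (1 - (X : Polynomial ℤ)^(i+1))) ≠ 0 :=
  Finset.prod_ne_zero_iff.mpr (fun i _ => one_sub_X_pow_ne_zero i)

lemma gb_prod : ∀ m n : ℕ,
    gb m n * ∏ i ∈ Finset.range n, (1 - (X : Polynomial ℤ)^(i+1)) =
      ∏ i ∈ Finset.range n, (1 - (X : Polynomial ℤ)^(m-i)) := by
  intro m
  induction m with
  | zero =>
    intro n
    cases n with
    | zero => simp
    | succ k =>
      rw [gb_eq_zero 0 (k+1) (by omega), zero_mul]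
      symm
      exact Finset.prod_eq_zero_iff.mpr ⟨0, Finset.mem_range.mpr (by omega), by simp⟩
  | succ m ih =>
    intro n
    cases n with
    | zero => simp
    | succ k =>
      by_cases hk : k ≤ m
      · have hx : (X : Polynomial ℤ)^(m-k) * X^(k+1) = X^(m+1) := by
          rw [← pow_add]; congr 1; omega
        rw [gb_succ]
        rw [Finset.prod_range_succ (fun i => (1 - (X : Polynomial ℤ)^(i+1))) k]
        have h1 := ih (k+1)
        have h2 := ih k
        rw [Finset.prod_range_succ (fun i => (1 - (X : Polynomial ℤ)^(i+1))) k] at h1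
        have hR : ∏ i ∈ Finset.range (k+1), (1 - (X : Polynomial ℤ)^(m+1-i)) =
            (1 - X^(m+1)) * ∏ i ∈ Finset.range k, (1 - (X : Polynomial ℤ)^(m-i)) := by
          rw [Finset.prod_range_succ', mul_comm]
          congr 1
          exact Finset.prod_congr rfl (fun i _ => by congr 2; omega)
        rw [hR]
        have h1' : ∏ i ∈ Finset.range (k+1), (1 - (X : Polynomial ℤ)^(m-i)) =
            (∏ i ∈ Finset.range k, (1 - (X : Polynomial ℤ)^(m-i))) * (1 - X^(m-k)) :=
          Finset.prod_range_succ _ k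
        rw [h1'] at h1
        set A := ∏ i ∈ Finset.range k, (1 - (X : Polynomial ℤ)^(m-i))
        calc (gb m (k+1) + X^(m-k) * gb m k) *
              ((∏ i ∈ Finset.range k, (1 - (X:Polynomial ℤ)^(i+1))) * (1 - X^(k+1)))
            = gb m (k+1) * ((∏ i ∈ Finset.range k, (1 - (X:Polynomial ℤ)^(i+1))) * (1 - X^(k+1)))
              + X^(m-k) * (gb m k * ∏ i ∈ Finset.range k, (1 - (X:Polynomial ℤ)^(i+1)))
                * (1 - X^(k+1)) := by ring
          _ = A * (1 - X^(m-k)) + X^(m-k) * A * (1 - X^(k+1)) := by rw [h1, h2]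
          _ = (1 - X^(m+1)) * A := by linear_combination (-A) * hx
      · -- m < k, so m+1 < k+1
        rw [gb_eq_zero (m+1) (k+1) (by omega), zero_mul]
        symm
        exact Finset.prod_eq_zero_iff.mpr ⟨m+1, Finset.mem_range.mpr (by omega), by simp⟩
lemma gb_pascal2 (m n : ℕ) : gb (m+1) (n+1) = X^(n+1) * gb m (n+1) + gb m n := by
  by_cases h : n ≤ m
  · apply mul_right_cancel₀ (P_ne_zero (n+1))
    have hx : (X : Polynomial ℤ)^(n+1) * X^(m-n) = X^(m+1) := by
      rw [← pow_add]; congr 1; omega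
    have hL := gb_prod (m+1) (n+1)
    have h1 := gb_prod m (n+1)
    have h2 := gb_prod m n
    rw [Finset.prod_range_succ (fun i => (1 - (X : Polynomial ℤ)^(i+1))) n] at h1
    rw [Finset.prod_range_succ (fun i => (1 - (X : Polynomial ℤ)^(m-i))) n] at h1
    have hR : ∏ i ∈ Finset.range (n+1), (1 - (X : Polynomial ℤ)^(m+1-i)) =
        (1 - X^(m+1)) * ∏ i ∈ Finset.range n, (1 - (X : Polynomial ℤ)^(m-i)) := by
      rw [Finset.prod_range_succ', mul_comm]
      congr 1
      exact Finset.prod_congr rfl (fun i _ => by congr 2; omega)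
    rw [hL, hR, Finset.prod_range_succ (fun i => (1 - (X : Polynomial ℤ)^(i+1))) n]
    set A := ∏ i ∈ Finset.range n, (1 - (X : Polynomial ℤ)^(m-i))
    calc (1 - X^(m+1)) * A
        = X^(n+1) * (A * (1 - X^(m-n))) + A * (1 - X^(n+1)) := by
          linear_combination A * hx
      _ = X^(n+1) * (gb m (n+1) * ((∏ i ∈ Finset.range n, (1 - (X:Polynomial ℤ)^(i+1))) * (1 - X^(n+1))))
            + (gb m n * ∏ i ∈ Finset.range n, (1 - (X:Polynomial ℤ)^(i+1))) * (1 - X^(n+1)) := by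
          rw [h1, h2]
      _ = (X^(n+1) * gb m (n+1) + gb m n) *
            ((∏ i ∈ Finset.range n, (1 - (X:Polynomial ℤ)^(i+1))) * (1 - X^(n+1))) := by ring
  · rw [gb_eq_zero (m+1) (n+1) (by omega), gb_eq_zero m (n+1) (by omega),
      gb_eq_zero m n (by omega)]
    ring

lemma H1 (n j : ℕ) : gb (n+1-j) (j+1) = X^(j+1) * gb (n-j) (j+1) + gb (n-j) j := by
  by_cases h : j ≤ n
  · rw [show n+1-j = (n-j)+1 by omega, gb_pascal2]
  · obtain ⟨j', rfl⟩ : ∃ j', j = j'+1 := ⟨j-1, by omega⟩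
    rw [show n+1-(j'+1) = 0 by omega, show n-(j'+1) = 0 by omega]
    simp

lemma H2 (n j : ℕ) : gb (n+1-j) (j+1) = gb (n-j) (j+1) + X^(n-j-j) * gb (n-j) j := by
  by_cases h : j ≤ n
  · rw [show n+1-j = (n-j)+1 by omega, gb_succ]
  · obtain ⟨j', rfl⟩ : ∃ j', j = j'+1 := ⟨j-1, by omega⟩
    rw [show n+1-(j'+1) = 0 by omega, show n-(j'+1) = 0 by omega]
    simp

lemma E1 (j : ℕ) : (j+1)*j/2 + (j+1) = (j+1)*((j+1)+1)/2 := by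
  have h : (j+1)*((j+1)+1) = (j+1)*j + (j+1)*2 := by ring
  rw [h, Nat.add_mul_div_right _ _ (by norm_num : 0 < 2)]

lemma E3 (j : ℕ) : (j+1)*((j+1)+1)/2 = j*(j-1)/2 + (2*j+1) := by
  cases j with
  | zero => norm_num
  | succ j' =>
    have h : (j'+2)*((j'+2)+1) = (j'+1)*j' + (2*(j'+1)+1)*2 := by ring
    rw [h, Nat.add_mul_div_right _ _ (by norm_num : 0 < 2), Nat.succ_sub_one]
noncomputable def Ssum (n : ℕ) : Polynomial ℤ :=
  ∑ i ∈ Finset.range (n+1), (-1:Polynomial ℤ)^i * X^(i*(i-1)/2) * gb (n-i) i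

noncomputable def Tsum (n : ℕ) : Polynomial ℤ :=
  ∑ i ∈ Finset.range (n+1), (-1:Polynomial ℤ)^i * X^(i*(i+1)/2) * gb (n-i) i

lemma neg_pow_succ' (j : ℕ) : ((-1 : Polynomial ℤ))^(j+1) = -(-1)^j := by
  rw [pow_succ]; ring

lemma gbST (n : ℕ) : Ssum (n+2) = Tsum (n+1) - Tsum n := by
  have hS : Ssum (n+2) =
      (∑ j ∈ Finset.range (n+2),
        ((-1:Polynomial ℤ)^(j+1) * X^((j+1)*j/2 + (j+1)) * gb (n-j) (j+1)
          + (-((-1:Polynomial ℤ)^j * X^(j*(j+1)/2) * gb (n-j) j)))) + 1 := by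
    rw [Ssum, Finset.sum_range_succ']
    congr 1
    · apply Finset.sum_congr rfl
      intro j _
      rw [show n+2-(j+1) = n+1-j by omega,
        show (j+1)*((j+1)-1)/2 = (j+1)*j/2 by norm_num, H1 n j,
        neg_pow_succ', show j*(j+1)/2 = (j+1)*j/2 by rw [Nat.mul_comm],
        pow_add X ((j+1)*j/2) (j+1)]
      ring
    · simp
  rw [Finset.sum_add_distrib] at hS
  have hA : ∑ j ∈ Finset.range (n+2),
      (-1:Polynomial ℤ)^(j+1) * X^((j+1)*j/2 + (j+1)) * gb (n-j) (j+1) =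
      ∑ j ∈ Finset.range (n+1),
      (-1:Polynomial ℤ)^(j+1) * X^((j+1)*j/2 + (j+1)) * gb (n-j) (j+1) := by
    rw [Finset.sum_range_succ, show n-(n+1) = 0 by omega,
      gb_eq_zero 0 (n+2) (by omega)]
    ring
  have hB : ∑ j ∈ Finset.range (n+2),
      (-((-1:Polynomial ℤ)^j * X^(j*(j+1)/2) * gb (n-j) j)) = -(Tsum n) := by
    rw [Finset.sum_range_succ, show n-(n+1) = 0 by omega,
      gb_eq_zero 0 (n+1) (by omega), Tsum, ← Finset.sum_neg_distrib]
    simp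
  have hT1 : Tsum (n+1) = (∑ j ∈ Finset.range (n+1),
      (-1:Polynomial ℤ)^(j+1) * X^((j+1)*j/2 + (j+1)) * gb (n-j) (j+1)) + 1 := by
    rw [Tsum, Finset.sum_range_succ']
    congr 1
    · apply Finset.sum_congr rfl
      intro j _
      rw [show n+1-(j+1) = n-j by omega, show (j+1)*((j+1)+1)/2 = (j+1)*j/2 + (j+1) from (E1 j).symm]
    · simp
  rw [hS, hA, hB, hT1]
  ring

lemma gbTP (n : ℕ) : Tsum (n+2) = Tsum (n+1) - X^(n+1) * Ssum n := by
  have key2 : ∀ j : ℕ, (-1:Polynomial ℤ)^(j+1) * X^((j+1)*((j+1)+1)/2) * (X^(n-j-j) * gb (n-j) j)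
      = -((-1:Polynomial ℤ)^j * X^(j*(j-1)/2 + (n+1)) * gb (n-j) j) := by
    intro j
    by_cases h : 2*j ≤ n
    · have e : j*(j-1)/2 + (n+1) = (j+1)*((j+1)+1)/2 + (n-j-j) := by
        rw [E3]; omega
      rw [neg_pow_succ', e, pow_add]
      ring
    · rw [gb_eq_zero (n-j) j (by omega)]
      ring
  have hT : Tsum (n+2) =
      (∑ j ∈ Finset.range (n+2),
        ((-1:Polynomial ℤ)^(j+1) * X^((j+1)*((j+1)+1)/2) * gb (n-j) (j+1)
          + (-((-1:Polynomial ℤ)^j * X^(j*(j-1)/2 + (n+1)) * gb (n-j) j)))) + 1 := by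
    rw [Tsum, Finset.sum_range_succ']
    congr 1
    · apply Finset.sum_congr rfl
      intro j _
      rw [show n+2-(j+1) = n+1-j by omega, H2 n j, mul_add, key2 j]
    · simp
  rw [Finset.sum_add_distrib] at hT
  have hC : ∑ j ∈ Finset.range (n+2),
      (-1:Polynomial ℤ)^(j+1) * X^((j+1)*((j+1)+1)/2) * gb (n-j) (j+1) =
      ∑ j ∈ Finset.range (n+1),
      (-1:Polynomial ℤ)^(j+1) * X^((j+1)*((j+1)+1)/2) * gb (n-j) (j+1) := by
    rw [Finset.sum_range_succ, show n-(n+1) = 0 by omega,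
      gb_eq_zero 0 (n+2) (by omega)]
    ring
  have hD : ∑ j ∈ Finset.range (n+2),
      (-((-1:Polynomial ℤ)^j * X^(j*(j-1)/2 + (n+1)) * gb (n-j) j)) = -(X^(n+1) * Ssum n) := by
    rw [Finset.sum_range_succ, show n-(n+1) = 0 by omega,
      gb_eq_zero 0 (n+1) (by omega), Ssum, Finset.mul_sum, ← Finset.sum_neg_distrib]
    rw [show (-((-1:Polynomial ℤ)^(n+1) * X^((n+1)*((n+1)-1)/2 + (n+1)) * 0)) = 0 by ring, add_zero]
    apply Finset.sum_congr rfl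
    intro j _
    rw [pow_add]
    ring
  have hT1 : Tsum (n+1) = (∑ j ∈ Finset.range (n+1),
      (-1:Polynomial ℤ)^(j+1) * X^((j+1)*((j+1)+1)/2) * gb (n-j) (j+1)) + 1 := by
    rw [Tsum, Finset.sum_range_succ']
    congr 1
    · apply Finset.sum_congr rfl
      intro j _
      rw [show n+1-(j+1) = n-j by omega]
    · simp
  rw [hT, hC, hD, hT1]
  ring

lemma S_step (n : ℕ) : Ssum (n+3) = -(X^(n+1) * Ssum n) := by
  have h1 := gbST (n+1)
  rw [show n+1+2 = n+3 by omega, show n+1+1 = n+2 by omega, gbTP n] at h1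
  rw [h1]
  ring

lemma S2 : Ssum 2 = 0 := by
  norm_num [Ssum, Finset.sum_range_succ, show (2:ℕ) = 1+1 from rfl, gb_succ]

lemma S_final (k : ℕ) : Ssum (3*k+2) = 0 := by
  induction k with
  | zero => exact S2
  | succ k ih =>
    rw [show 3*(k+1)+2 = (3*k+2)+3 by ring, S_step, ih]
    ring
theorem gauss_alternating_sum_three_k_plus_two
    (G : ℕ → ℕ → Polynomial ℤ)
    (hG : ∀ m k : ℕ, k ≤ m →
      G m k * ∏ i ∈ Finset.range k, (1 - (X : Polynomial ℤ) ^ (i + 1)) =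
        ∏ i ∈ Finset.range k, (1 - (X : Polynomial ℤ) ^ (m - i)))
    (hG0 : ∀ m k : ℕ, m < k → G m k = 0)
    (k : ℕ) :
    ∑ i ∈ Finset.range ((3 * k + 2) / 2 + 1),
        (-1 : Polynomial ℤ) ^ i * X ^ (i * (i - 1) / 2) * G (3 * k + 2 - i) i =
      0 := by
  have hGgb : ∀ m n : ℕ, G m n = gb m n := by
    intro m n
    by_cases h : n ≤ m
    · exact mul_right_cancel₀ (P_ne_zero n) ((hG m n h).trans (gb_prod m n).symm)
    · rw [hG0 m n (by omega), gb_eq_zero m n (by omega)]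
  calc ∑ i ∈ Finset.range ((3 * k + 2) / 2 + 1),
        (-1 : Polynomial ℤ) ^ i * X ^ (i * (i - 1) / 2) * G (3 * k + 2 - i) i
      = ∑ i ∈ Finset.range ((3 * k + 2) + 1),
        (-1 : Polynomial ℤ) ^ i * X ^ (i * (i - 1) / 2) * G (3 * k + 2 - i) i := by
        apply Finset.sum_subset (Finset.range_subset_range.mpr (by omega))
        intro x hx hnx
        rw [Finset.mem_range] at hx hnx
        rw [hGgb, gb_eq_zero (3*k+2-x) x (by omega), mul_zero]
    _ = Ssum (3*k+2) := by
        rw [Ssum]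
        exact Finset.sum_congr rfl (fun i _ => by rw [hGgb])
    _ = 0 := S_final k
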